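/- Let m = n - 1 ≥ 1, k ∈ ℝ, λ with λ > √(-k) if k ≤ 0, and l = l_k(λ). Then ∫₀^{l_k(λ)} (c_k(t) - λ s_k(t))^m dt = h_k(l_k(λ)), where c_k, s_k are the generalized cosine and sine (c_k'' = -k c_k, c_k(0)=1, c_k'(0)=0; s_k'' = -k s_k, s_k(0)=0, s_k'(0)=1), l_k(λ) is the first zero of σ_{k,λ}(t) = c_k(t) - λ s_k(t), and h_k(r) = (∫₀^r s_k^{n-1})/s_k(r)^{n-1}. -/

import Mathlib

/-- Generalized cosine `c_k` (`c_k'' = -k c_k`, `c_k(0)=1`, `c_k'(0)=0`). -/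
noncomputable def ck (k t : ℝ) : ℝ :=
  if k = 0 then 1
  else if 0 < k then Real.cos (Real.sqrt k * t)
  else Real.cosh (Real.sqrt (-k) * t)

/-- Generalized sine `s_k` (`s_k'' = -k s_k`, `s_k(0)=0`, `s_k'(0)=1`). -/
noncomputable def sk (k t : ℝ) : ℝ :=
  if k = 0 then t
  else if 0 < k then Real.sin (Real.sqrt k * t) / Real.sqrt k
  else Real.sinh (Real.sqrt (-k) * t) / Real.sqrt (-k)

/-- `l_k(λ)`, the first positive zero of `σ_{k,λ}(t) = c_k(t) - λ s_k(t)`. -/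
noncomputable def lk (k lam : ℝ) : ℝ :=
  if k = 0 then 1 / lam
  else if 0 < k then (Real.pi / 2 - Real.arctan (lam / Real.sqrt k)) / Real.sqrt k
  else (Real.log ((lam / Real.sqrt (-k) + 1) / (lam / Real.sqrt (-k) - 1)) / 2) / Real.sqrt (-k)

/-- The space-form volume-to-area ratio `h_k(r) = (∫₀^r s_k^{n-1})/s_k(r)^{n-1}`. -/
noncomputable def hk (k : ℝ) (n : ℕ) (t : ℝ) : ℝ :=
  (∫ r in (0:ℝ)..t, sk k r ^ (n - 1)) / sk k t ^ (n - 1)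

/-- `∫₀^{l_k(λ)} (c_k(t) - λ s_k(t))^{n-1} dt = h_k(l_k(λ))`: the volume of the
geodesic ball of radius `l_k(λ)` in the space form equals its boundary area
times `h_k`, computed via the Jacobian `σ_{k,λ}^{n-1}` along normal geodesics
from the boundary sphere. -/
theorem stmt_16 (n : ℕ) (hn : 2 ≤ n) (k lam : ℝ)
    (hlam0 : k = 0 → 0 < lam) (hlamneg : k < 0 → Real.sqrt (-k) < lam) :
    ∫ t in (0:ℝ)..(lk k lam), (ck k t - lam * sk k t) ^ (n - 1) =
      hk k n (lk k lam) := by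
  set l := lk k lam with hl
  have key : ∀ t : ℝ, ck k t - lam * sk k t = sk k (l - t) / sk k l := by
    intro t
    rcases lt_trichotomy k 0 with hk0 | hk0 | hk0
    · -- k < 0
      have hk' : ¬ k = 0 := ne_of_lt hk0
      have hk'' : ¬ 0 < k := not_lt.mpr hk0.le
      have ha : 0 < Real.sqrt (-k) := Real.sqrt_pos.mpr (by linarith)
      set a := Real.sqrt (-k) with hadef
      have hμ : a < lam := hlamneg hk0
      have hμ1 : 1 < lam / a := (one_lt_div ha).mpr hμ
      set r := (lam / a + 1) / (lam / a - 1) with hr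
      have hr1 : 1 < r := by
        rw [hr, lt_div_iff₀ (by linarith)]; linarith
      have hr0 : 0 < r := lt_trans one_pos hr1
      set u := Real.exp (Real.log r / 2) with hu
      have hu0 : 0 < u := Real.exp_pos _
      have hu1 : 1 < u := by
        rw [hu]
        have h2 : (0:ℝ) < Real.log r / 2 := by
          have := Real.log_pos hr1; linarith
        calc (1:ℝ) = Real.exp 0 := Real.exp_zero.symm
          _ < _ := Real.exp_lt_exp.mpr h2
      have hu2 : u ^ 2 = r := by
        rw [hu, sq, ← Real.exp_add,
          show Real.log r / 2 + Real.log r / 2 = Real.log r by ring, Real.exp_log hr0]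
      have hL : a * l = Real.log r / 2 := by
        rw [hl, lk, if_neg hk', if_neg hk'']
        simp only [← hadef, ← hr]
        field_simp
      have hsinh : Real.sinh (a * l) = (u - u⁻¹) / 2 := by
        rw [hL, Real.sinh_eq, Real.exp_neg]
      have hcosh : Real.cosh (a * l) = (u + u⁻¹) / 2 := by
        rw [hL, Real.cosh_eq, Real.exp_neg]
      have hsinh0 : 0 < Real.sinh (a * l) := by
        rw [hsinh]
        have : u⁻¹ < 1 := inv_lt_one_of_one_lt₀ hu1
        linarith
      have hd : lam / a - 1 ≠ 0 := by linarith
      have hu2' : u ^ 2 * (lam / a - 1) = lam / a + 1 := by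
        rw [hu2, hr, div_mul_cancel₀ _ hd]
      have hu2'' : (lam - a) * u ^ 2 = lam + a := by
        field_simp [ha.ne'] at hu2'
        linarith
      have hkey : a * Real.cosh (a * l) = lam * Real.sinh (a * l) := by
        rw [hcosh, hsinh]
        field_simp
        linear_combination -hu2''
      simp only [ck, sk, if_neg hk', if_neg hk'', ← hadef]
      rw [show a * (l - t) = a * l - a * t by ring, Real.sinh_sub]
      field_simp
      linear_combination Real.sinh (a * t) * hkey
    · -- k = 0
      have hlam := hlam0 hk0
      simp only [ck, sk, hl, lk, hk0, if_pos rfl, ↓reduceIte]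
      field_simp
    · -- k > 0
      have hk' : ¬ k = 0 := ne_of_gt hk0
      have ha : 0 < Real.sqrt k := Real.sqrt_pos.mpr hk0
      set a := Real.sqrt k with hadef
      set θ := Real.arctan (lam / a) with hθ
      have hL : a * l = Real.pi / 2 - θ := by
        rw [hl, lk, if_neg hk', if_pos hk0]
        simp only [← hadef, ← hθ]
        field_simp
      have hsin : Real.sin (a * l) = Real.cos θ := by rw [hL, Real.sin_pi_div_two_sub]
      have hcos : Real.cos (a * l) = Real.sin θ := by rw [hL, Real.cos_pi_div_two_sub]
      have hcosθ : 0 < Real.cos θ := Real.cos_arctan_pos _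
      have hsin0 : Real.sin (a * l) ≠ 0 := by rw [hsin]; exact hcosθ.ne'
      have hkey : a * Real.cos (a * l) = lam * Real.sin (a * l) := by
        rw [hsin, hcos]
        have ht : Real.tan θ = lam / a := Real.tan_arctan _
        rw [Real.tan_eq_sin_div_cos] at ht
        rw [div_eq_div_iff hcosθ.ne' ha.ne'] at ht
        linarith
      simp only [ck, sk, if_neg hk', if_pos hk0, ← hadef]
      rw [show a * (l - t) = a * l - a * t by ring, Real.sin_sub]
      field_simp
      linear_combination Real.sin (a * t) * hkey
  simp_rw [key, div_pow]
  rw [intervalIntegral.integral_div,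
    intervalIntegral.integral_comp_sub_left (fun u => sk k u ^ (n - 1)) l]
  simp [hk]
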